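/- Let X be a real n×p matrix with rank(X) = p, X† = (XᵀX)⁻¹Xᵀ, and β₀ ∈ ℝᵖ. On a probability space, let S : Ω → ℝ^{r×n} (p ≤ r ≤ n) be a random matrix with rank(S(ω)X) = p almost surely, let Y(ω) be the Moore–Penrose inverse of S(ω)X, and let ε : Ω → ℝⁿ be independent of S with E[ε_i] = 0 and E[ε_iε_j] = σ²δ_{ij} (σ > 0); assume square-integrability of all relevant entries. Set β̃ = YS(Xβ₀ + ε) and β̂ = X†(Xβ₀ + ε). Then V[β̃] − V[β̂] is positive semidefinite (Loewner order V[β̃] ⪰ V[β̂]), and in particular trace(V[β̃]) ≥ trace(V[β̂]), where V[·] denotes the covariance matrix. -/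

import Mathlib

open Matrix MeasureTheory

private lemma aux_isUnit {m : ℕ} (M : Matrix (Fin m) (Fin m) ℝ) (h : M.rank = m) :
    IsUnit M := by
  rw [← Matrix.mulVec_surjective_iff_isUnit]
  have h2 : LinearMap.range M.mulVecLin = ⊤ := by
    apply Submodule.eq_top_of_finrank_eq
    rw [Module.finrank_fin_fun]
    exact h
  intro v
  obtain ⟨w, hw⟩ := LinearMap.range_eq_top.mp h2 v
  exact ⟨w, by simpa using hw⟩

private lemma aux_WB {q m : ℕ} (B : Matrix (Fin q) (Fin m) ℝ) (h : B.rank = m) :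
    ((Bᵀ * B)⁻¹ * Bᵀ) * B = 1 := by
  have hU : IsUnit (Bᵀ * B) :=
    aux_isUnit _ (by rw [Matrix.rank_transpose_mul_self]; exact h)
  rw [Matrix.mul_assoc, Matrix.nonsing_inv_mul _ ((Matrix.isUnit_iff_isUnit_det _).mp hU)]

private lemma aux_YB {q m : ℕ} (B : Matrix (Fin q) (Fin m) ℝ) (Y : Matrix (Fin m) (Fin q) ℝ)
    (hb : B.rank = m) (h1 : B * Y * B = B) : Y * B = 1 := by
  have hidem : (Y * B) * (Y * B) = Y * B := by
    calc (Y * B) * (Y * B) = Y * (B * Y * B) := by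
          simp only [Matrix.mul_assoc]
      _ = Y * B := by rw [h1]
  have hr : (Y * B).rank = m := by
    refine le_antisymm (Matrix.rank_le_width _) ?_
    have h3 : B * (Y * B) = B := by rw [← Matrix.mul_assoc, h1]
    calc m = B.rank := hb.symm
      _ = (B * (Y * B)).rank := by rw [h3]
      _ ≤ (Y * B).rank := Matrix.rank_mul_le_right _ _
  have hdet := (Matrix.isUnit_iff_isUnit_det _).mp (aux_isUnit _ hr)
  calc Y * B = (Y * B) * ((Y * B) * (Y * B)⁻¹) := by
        rw [Matrix.mul_nonsing_inv _ hdet, Matrix.mul_one]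
    _ = ((Y * B) * (Y * B)) * (Y * B)⁻¹ := by simp only [Matrix.mul_assoc]
    _ = (Y * B) * (Y * B)⁻¹ := by rw [hidem]
    _ = 1 := Matrix.mul_nonsing_inv _ hdet

private lemma aux_unique {q m : ℕ} (B : Matrix (Fin q) (Fin m) ℝ) (Y : Matrix (Fin m) (Fin q) ℝ)
    (hb : B.rank = m) (h1 : B * Y * B = B) (h2 : Y * (B * Y) = Y) (h3 : (B * Y)ᵀ = B * Y) :
    Y = (Bᵀ * B)⁻¹ * Bᵀ := by
  set W : Matrix (Fin m) (Fin q) ℝ := (Bᵀ * B)⁻¹ * Bᵀ with hW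
  have hWB : W * B = 1 := aux_WB B hb
  have hYB : Y * B = 1 := aux_YB B Y hb h1
  have hBWt : (B * W)ᵀ = B * W := by
    rw [hW]
    simp only [Matrix.transpose_mul, Matrix.transpose_transpose, Matrix.transpose_nonsing_inv,
      Matrix.mul_assoc]
  have hBt : Bᵀ = Bᵀ * (B * W) := by
    conv_lhs => rw [← Matrix.mul_one B, ← hWB, ← Matrix.mul_assoc]
    rw [Matrix.transpose_mul, hBWt]
  calc Y = Y * (B * Y) := h2.symm
    _ = Y * (Yᵀ * Bᵀ) := by rw [← h3, Matrix.transpose_mul]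
    _ = Y * (Yᵀ * (Bᵀ * (B * W))) := by rw [← hBt]
    _ = (Y * (Yᵀ * Bᵀ)) * (B * W) := by simp only [Matrix.mul_assoc]
    _ = (Y * (B * Y)) * (B * W) := by rw [← Matrix.transpose_mul, h3]
    _ = Y * (B * W) := by rw [h2]
    _ = (Y * B) * W := by rw [Matrix.mul_assoc]
    _ = W := by rw [hYB, Matrix.one_mul]
private lemma aux_meas {rr nn pp : ℕ} (X : Matrix (Fin nn) (Fin pp) ℝ) (k : Fin pp) (i : Fin nn) :
    Measurable (fun M : Fin rr → Fin nn → ℝ =>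
      ((((Matrix.of M * X)ᵀ * (Matrix.of M * X))⁻¹ * (Matrix.of M * X)ᵀ) * Matrix.of M) k i) := by
  have hc : Continuous (fun M : Fin rr → Fin nn → ℝ => Matrix.of M) := continuous_id
  have hMX : Continuous fun M : Fin rr → Fin nn → ℝ => Matrix.of M * X :=
    hc.matrix_mul continuous_const
  have hB : Continuous fun M : Fin rr → Fin nn → ℝ => (Matrix.of M * X)ᵀ * (Matrix.of M * X) :=
    hMX.matrix_transpose.matrix_mul hMX
  have hdet : Measurable fun M : Fin rr → Fin nn → ℝ =>
      (((Matrix.of M * X)ᵀ * (Matrix.of M * X)).det)⁻¹ := hB.matrix_det.measurable.inv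
  have hadj : ∀ a b, Measurable fun M : Fin rr → Fin nn → ℝ =>
      ((Matrix.of M * X)ᵀ * (Matrix.of M * X)).adjugate a b := fun a b =>
    (hB.matrix_adjugate.matrix_elem a b).measurable
  have hinv : ∀ a b, Measurable fun M : Fin rr → Fin nn → ℝ =>
      (((Matrix.of M * X)ᵀ * (Matrix.of M * X))⁻¹) a b := by
    intro a b
    simp only [Matrix.inv_def, Matrix.smul_apply, Ring.inverse_eq_inv, smul_eq_mul]
    exact hdet.mul (hadj a b)
  have hC : ∀ a b, Measurable fun M : Fin rr → Fin nn → ℝ =>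
      ((Matrix.of M * X)ᵀ * Matrix.of M) a b :=
    fun a b => ((hMX.matrix_transpose.matrix_mul hc).matrix_elem a b).measurable
  have heq : (fun M : Fin rr → Fin nn → ℝ =>
      ((((Matrix.of M * X)ᵀ * (Matrix.of M * X))⁻¹ * (Matrix.of M * X)ᵀ) * Matrix.of M) k i)
      = fun M => ∑ l, (((Matrix.of M * X)ᵀ * (Matrix.of M * X))⁻¹) k l
          * ((Matrix.of M * X)ᵀ * Matrix.of M) l i := by
    funext M
    rw [Matrix.mul_assoc, Matrix.mul_apply]
  rw [heq]
  exact Finset.measurable_sum _ fun l _ => (hinv k l).mul (hC l i)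

private lemma aux_intmul {Ω : Type*} [MeasurableSpace Ω] {μ : Measure Ω} [IsProbabilityMeasure μ]
    {f g : Ω → ℝ} (hf : MemLp f 2 μ) (hg : MemLp g 2 μ) :
    Integrable (fun ω => f ω * g ω) μ := by
  have h : MemLp (f • g) 1 μ := hg.smul hf
  rw [memLp_one_iff_integrable] at h
  exact h

private lemma aux_dot {p n : ℕ} (v : Fin p → ℝ) (P Q : Matrix (Fin p) (Fin n) ℝ) :
    ∑ i, (∑ k, v k * P k i) * (∑ l, v l * Q l i)
      = ∑ k, ∑ l, v k * v l * (∑ i, P k i * Q l i) := by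
  calc ∑ i, (∑ k, v k * P k i) * (∑ l, v l * Q l i)
      = ∑ i, ∑ k, ∑ l, (v k * P k i) * (v l * Q l i) := by
        refine Finset.sum_congr rfl fun i _ => ?_
        rw [Finset.sum_mul_sum]
    _ = ∑ k, ∑ i, ∑ l, (v k * P k i) * (v l * Q l i) := Finset.sum_comm
    _ = ∑ k, ∑ l, ∑ i, (v k * P k i) * (v l * Q l i) := by
        exact Finset.sum_congr rfl fun k _ => Finset.sum_comm
    _ = ∑ k, ∑ l, v k * v l * (∑ i, P k i * Q l i) := by
        refine Finset.sum_congr rfl fun k _ => Finset.sum_congr rfl fun l _ => ?_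
        rw [Finset.mul_sum]
        exact Finset.sum_congr rfl fun i _ => by ring

private lemma aux_ptwise {p n : ℕ} (X : Matrix (Fin n) (Fin p) ℝ)
    (Xd A : Matrix (Fin p) (Fin n) ℝ)
    (hXd : Xd = (Xᵀ * X)⁻¹ * Xᵀ) (hXdX : Xd * X = 1) (hAX : A * X = 1) (v : Fin p → ℝ) :
    ∑ i, (∑ k, v k * Xd k i) ^ 2 ≤ ∑ i, (∑ k, v k * A k i) ^ 2 := by
  set c : Fin n → ℝ := fun i => ∑ k, v k * Xd k i with hc
  set w : Fin n → ℝ := fun i => ∑ k, v k * A k i with hw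
  have key : ∀ (A' : Matrix (Fin p) (Fin n) ℝ), A' * X = 1 → Xd * A'ᵀ = (Xᵀ * X)⁻¹ := by
    intro A' hA'
    rw [hXd, Matrix.mul_assoc, ← Matrix.transpose_mul, hA', Matrix.transpose_one, Matrix.mul_one]
  have hent : ∀ k l, ∑ i, Xd k i * A l i = ∑ i, Xd k i * Xd l i := by
    intro k l
    calc ∑ i, Xd k i * A l i = (Xd * Aᵀ) k l := by
          rw [Matrix.mul_apply]
          exact Finset.sum_congr rfl fun i _ => by rw [Matrix.transpose_apply]
      _ = (Xd * Xdᵀ) k l := by rw [key A hAX, key Xd hXdX]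
      _ = ∑ i, Xd k i * Xd l i := by
          rw [Matrix.mul_apply]
          exact Finset.sum_congr rfl fun i _ => by rw [Matrix.transpose_apply]
  have hcw : ∑ i, c i * w i = ∑ i, c i * c i := by
    rw [hc, hw, aux_dot v Xd A, aux_dot v Xd Xd]
    exact Finset.sum_congr rfl fun k _ => Finset.sum_congr rfl fun l _ => by rw [hent k l]
  have h0 : 0 ≤ ∑ i, (w i - c i) ^ 2 := Finset.sum_nonneg fun i _ => sq_nonneg _
  have hexp : ∑ i, (w i - c i) ^ 2
      = ∑ i, (w i) ^ 2 - 2 * (∑ i, c i * w i) + ∑ i, c i * c i := by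
    rw [Finset.mul_sum, ← Finset.sum_sub_distrib, ← Finset.sum_add_distrib]
    exact Finset.sum_congr rfl fun i _ => by ring
  have hsq : ∑ i, c i * c i = ∑ i, (c i) ^ 2 :=
    Finset.sum_congr rfl fun i _ => by ring
  linarith

private lemma aux_diag {m : ℕ} {M : Matrix (Fin m) (Fin m) ℝ} (h : M.PosSemidef) (k : Fin m) :
    0 ≤ M k k := by
  have := h.dotProduct_mulVec_nonneg (Pi.single k 1)
  simpa [dotProduct, Matrix.mulVec, Pi.single_apply, Finset.mul_sum, mul_ite, ite_mul,
    Finset.sum_ite_eq, Finset.sum_ite_eq'] using this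


/-- Loewner ordering of total variances under rank preservation:
if `rank(S(ω)X) = p` almost surely and `ε` (mean zero, covariance `σ²I`) is
independent of `S`, then the covariance matrix of the sketched solution
`β̃ = Y S (Xβ₀ + ε)` dominates that of the exact solution `β̂ = X†(Xβ₀ + ε)` in the
Loewner order, and in particular has at least as large a trace. -/
theorem total_variance_loewner_rank_preserved
    {n p r : ℕ} (X : Matrix (Fin n) (Fin p) ℝ) (hX : X.rank = p)
    (hpr : p ≤ r) (hrn : r ≤ n)
    (Xd : Matrix (Fin p) (Fin n) ℝ) (hXd : Xd = (Xᵀ * X)⁻¹ * Xᵀ)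
    {Ω : Type*} [MeasurableSpace Ω] (μ : Measure Ω) [IsProbabilityMeasure μ]
    (S : Ω → Matrix (Fin r) (Fin n) ℝ)
    (Y : Ω → Matrix (Fin p) (Fin r) ℝ)
    (hp1 : ∀ ω, (S ω * X) * Y ω * (S ω * X) = S ω * X)
    (hp2 : ∀ ω, Y ω * ((S ω * X) * Y ω) = Y ω)
    (hp3 : ∀ ω, ((S ω * X) * Y ω)ᵀ = (S ω * X) * Y ω)
    (hp4 : ∀ ω, (Y ω * (S ω * X))ᵀ = Y ω * (S ω * X))
    (hrank : ∀ᵐ ω ∂μ, (S ω * X).rank = p)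
    (β₀ : Fin p → ℝ) (σ : ℝ) (hσ : 0 < σ) (ε : Ω → Fin n → ℝ)
    (hindep : ProbabilityTheory.IndepFun ε
      ((fun ω i j => S ω i j) : Ω → Fin r → Fin n → ℝ) μ)
    (hεL2 : ∀ i, MemLp (fun ω => ε ω i) 2 μ)
    (hεmean : ∀ i, ∫ ω, ε ω i ∂μ = 0)
    (hεcov : ∀ i j, ∫ ω, ε ω i * ε ω j ∂μ = if i = j then σ ^ 2 else 0)
    (hYSL2 : ∀ i j, MemLp (fun ω => (Y ω * S ω) i j) 2 μ)
    (βtilde : Ω → Fin p → ℝ)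
    (hβtilde : ∀ ω, βtilde ω = Y ω *ᵥ (S ω *ᵥ (X *ᵥ β₀ + ε ω)))
    (βhat : Ω → Fin p → ℝ)
    (hβhat : ∀ ω, βhat ω = Xd *ᵥ (X *ᵥ β₀ + ε ω))
    (Vt : Matrix (Fin p) (Fin p) ℝ)
    (hVt : ∀ k l, Vt k l = (∫ ω, βtilde ω k * βtilde ω l ∂μ) -
      (∫ ω, βtilde ω k ∂μ) * (∫ ω, βtilde ω l ∂μ))
    (Vh : Matrix (Fin p) (Fin p) ℝ)
    (hVh : ∀ k l, Vh k l = (∫ ω, βhat ω k * βhat ω l ∂μ) -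
      (∫ ω, βhat ω k ∂μ) * (∫ ω, βhat ω l ∂μ)) :
    (Vt - Vh).PosSemidef ∧ Vh.trace ≤ Vt.trace := by
  classical
  have hXdX : Xd * X = 1 := by rw [hXd]; exact aux_WB X hX
  set G : Matrix (Fin r) (Fin n) ℝ → Matrix (Fin p) (Fin n) ℝ :=
    fun M => (((M * X)ᵀ * (M * X))⁻¹ * (M * X)ᵀ) * M with hGdef
  -- almost-everywhere structure
  have hae : ∀ᵐ ω ∂μ, Y ω * S ω = G (S ω) ∧ G (S ω) * X = 1 := by
    filter_upwards [hrank] with ω hω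
    have hY : Y ω = ((S ω * X)ᵀ * (S ω * X))⁻¹ * (S ω * X)ᵀ :=
      aux_unique (S ω * X) (Y ω) hω (hp1 ω) (hp2 ω) (hp3 ω)
    constructor
    · rw [hGdef, hY]
    · rw [hGdef]
      show ((((S ω * X)ᵀ * (S ω * X))⁻¹ * (S ω * X)ᵀ) * S ω) * X = 1
      rw [Matrix.mul_assoc]
      exact aux_WB (S ω * X) hω
  -- L² and integrability facts
  have hGS2 : ∀ k i, MemLp (fun ω => G (S ω) k i) 2 μ := fun k i =>
    (hYSL2 k i).ae_eq (hae.mono fun ω h => by rw [h.1])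
  have hεint : ∀ i, Integrable (fun ω => ε ω i) μ := fun i => (hεL2 i).integrable one_le_two
  have hεε : ∀ i j, Integrable (fun ω => ε ω i * ε ω j) μ := fun i j =>
    aux_intmul (hεL2 i) (hεL2 j)
  have hGSε : ∀ k i j, Integrable (fun ω => G (S ω) k i * ε ω j) μ := fun k i j =>
    aux_intmul (hGS2 k i) (hεL2 j)
  have hGSGS : ∀ k i l j, Integrable (fun ω => G (S ω) k i * G (S ω) l j) μ :=
    fun k i l j => aux_intmul (hGS2 k i) (hGS2 l j)
  -- independence consequences
  have hind1 : ∀ k i j, ProbabilityTheory.IndepFun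
      (fun ω => G (S ω) k i) (fun ω => ε ω j) μ := by
    intro k i j
    exact (hindep.comp (measurable_pi_apply j) (aux_meas (rr := r) X k i)).symm
  have hind2 : ∀ k l i j, ProbabilityTheory.IndepFun
      (fun ω => G (S ω) k i * G (S ω) l j) (fun ω => ε ω i * ε ω j) μ := by
    intro k l i j
    exact (hindep.comp ((measurable_pi_apply i).mul (measurable_pi_apply j))
      ((aux_meas (rr := r) X k i).mul (aux_meas (rr := r) X l j))).symm
  have hM1 : ∀ k i, ∫ ω, G (S ω) k i * ε ω i ∂μ = 0 := by
    intro k i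
    calc ∫ ω, G (S ω) k i * ε ω i ∂μ
        = (∫ ω, G (S ω) k i ∂μ) * ∫ ω, ε ω i ∂μ :=
          (hind1 k i i).integral_fun_mul_eq_mul_integral ((hGS2 k i).integrable one_le_two).aestronglyMeasurable (hεint i).aestronglyMeasurable
      _ = 0 := by rw [hεmean i, mul_zero]
  have hM2 : ∀ k l i j, ∫ ω, (G (S ω) k i * G (S ω) l j) * (ε ω i * ε ω j) ∂μ
      = (∫ ω, G (S ω) k i * G (S ω) l j ∂μ) * (if i = j then σ ^ 2 else 0) := by
    intro k l i j
    rw [← hεcov i j]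
    exact (hind2 k l i j).integral_fun_mul_eq_mul_integral (hGSGS k i l j).aestronglyMeasurable (hεε i j).aestronglyMeasurable
  have hprod : ∀ k l i j,
      Integrable (fun ω => (G (S ω) k i * G (S ω) l j) * (ε ω i * ε ω j)) μ := by
    intro k l i j
    exact (hind2 k l i j).integrable_mul (hGSGS k i l j) (hεε i j)
  -- expansion of the sketched estimator
  have hbt : ∀ᵐ ω ∂μ, ∀ k, βtilde ω k = β₀ k + ∑ i, G (S ω) k i * ε ω i := by
    filter_upwards [hae] with ω hω k
    rw [hβtilde ω]
    have h1 : Y ω *ᵥ (S ω *ᵥ (X *ᵥ β₀ + ε ω)) = β₀ + G (S ω) *ᵥ ε ω := by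
      rw [Matrix.mulVec_mulVec, hω.1, Matrix.mulVec_add, Matrix.mulVec_mulVec,
        hω.2, Matrix.one_mulVec]
    rw [h1]
    simp [Matrix.mulVec, dotProduct]
  -- first moments of the sketched estimator
  have hEt : ∀ k, ∫ ω, βtilde ω k ∂μ = β₀ k := by
    intro k
    rw [integral_congr_ae (hbt.mono fun ω h => h k)]
    have Isum : Integrable (fun ω => ∑ i, G (S ω) k i * ε ω i) μ :=
      integrable_finset_sum _ fun i _ => hGSε k i i
    rw [integral_add (integrable_const _) Isum, integral_finset_sum _ fun i _ => hGSε k i i]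
    simp [hM1 k]
  -- second moments of the sketched estimator
  have hE2t : ∀ k l, ∫ ω, βtilde ω k * βtilde ω l ∂μ
      = β₀ k * β₀ l + σ ^ 2 * ∑ i, ∫ ω, G (S ω) k i * G (S ω) l i ∂μ := by
    intro k l
    have hptw : ∀ᵐ ω ∂μ, βtilde ω k * βtilde ω l
        = β₀ k * β₀ l + (β₀ k * ∑ j, G (S ω) l j * ε ω j
          + (β₀ l * ∑ i, G (S ω) k i * ε ω i
            + ∑ i, ∑ j, (G (S ω) k i * G (S ω) l j) * (ε ω i * ε ω j))) := by
      filter_upwards [hbt] with ω h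
      have hsum : (∑ i, G (S ω) k i * ε ω i) * (∑ j, G (S ω) l j * ε ω j)
          = ∑ i, ∑ j, (G (S ω) k i * G (S ω) l j) * (ε ω i * ε ω j) := by
        rw [Finset.sum_mul_sum]
        exact Finset.sum_congr rfl fun i _ => Finset.sum_congr rfl fun j _ => by ring
      rw [h k, h l, ← hsum]
      ring
    have I2 : Integrable (fun ω => β₀ k * ∑ j, G (S ω) l j * ε ω j) μ :=
      (integrable_finset_sum _ fun j _ => hGSε l j j).const_mul _
    have I3 : Integrable (fun ω => β₀ l * ∑ i, G (S ω) k i * ε ω i) μ :=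
      (integrable_finset_sum _ fun i _ => hGSε k i i).const_mul _
    have I4 : Integrable
        (fun ω => ∑ i, ∑ j, (G (S ω) k i * G (S ω) l j) * (ε ω i * ε ω j)) μ :=
      integrable_finset_sum _ fun i _ => integrable_finset_sum _ fun j _ => hprod k l i j
    have I34 : Integrable (fun ω => β₀ l * ∑ i, G (S ω) k i * ε ω i
        + ∑ i, ∑ j, (G (S ω) k i * G (S ω) l j) * (ε ω i * ε ω j)) μ := I3.add I4
    have I234 : Integrable (fun ω => β₀ k * ∑ j, G (S ω) l j * ε ω j
        + (β₀ l * ∑ i, G (S ω) k i * ε ω i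
          + ∑ i, ∑ j, (G (S ω) k i * G (S ω) l j) * (ε ω i * ε ω j))) μ := I2.add I34
    rw [integral_congr_ae hptw]
    rw [integral_add (integrable_const _) I234, integral_add I2 I34,
      integral_add I3 I4, integral_const]
    have e2 : ∫ ω, β₀ k * ∑ j, G (S ω) l j * ε ω j ∂μ = 0 := by
      rw [integral_const_mul, integral_finset_sum _ fun j _ => hGSε l j j]
      simp [hM1 l]
    have e3 : ∫ ω, β₀ l * ∑ i, G (S ω) k i * ε ω i ∂μ = 0 := by
      rw [integral_const_mul, integral_finset_sum _ fun i _ => hGSε k i i]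
      simp [hM1 k]
    have e4 : ∫ ω, ∑ i, ∑ j, (G (S ω) k i * G (S ω) l j) * (ε ω i * ε ω j) ∂μ
        = σ ^ 2 * ∑ i, ∫ ω, G (S ω) k i * G (S ω) l i ∂μ := by
      rw [integral_finset_sum _ fun i _ => integrable_finset_sum _ fun j _ => hprod k l i j]
      have : ∀ i : Fin n, ∫ ω, ∑ j, (G (S ω) k i * G (S ω) l j) * (ε ω i * ε ω j) ∂μ
          = (∫ ω, G (S ω) k i * G (S ω) l i ∂μ) * σ ^ 2 := by
        intro i
        rw [integral_finset_sum _ fun j _ => hprod k l i j]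
        rw [Finset.sum_congr rfl fun j _ => hM2 k l i j]
        simp [mul_ite, mul_zero]
      rw [Finset.sum_congr rfl fun i _ => this i, Finset.mul_sum]
      exact Finset.sum_congr rfl fun i _ => by ring
    rw [e2, e3, e4]
    simp
  have hVt' : ∀ k l, Vt k l = σ ^ 2 * ∑ i, ∫ ω, G (S ω) k i * G (S ω) l i ∂μ := by
    intro k l
    rw [hVt k l, hE2t k l, hEt k, hEt l]
    ring
  -- exact estimator expansion
  have hbh : ∀ ω k, βhat ω k = β₀ k + ∑ i, Xd k i * ε ω i := by
    intro ω k
    rw [hβhat ω]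
    have h1 : Xd *ᵥ (X *ᵥ β₀ + ε ω) = β₀ + Xd *ᵥ ε ω := by
      rw [Matrix.mulVec_add, Matrix.mulVec_mulVec, hXdX, Matrix.one_mulVec]
    rw [h1]
    simp [Matrix.mulVec, dotProduct]
  have hXdε : ∀ (k : Fin p) (i : Fin n), Integrable (fun ω => Xd k i * ε ω i) μ :=
    fun k i => (hεint i).const_mul _
  have hEh : ∀ k, ∫ ω, βhat ω k ∂μ = β₀ k := by
    intro k
    have : (fun ω => βhat ω k) = fun ω => β₀ k + ∑ i, Xd k i * ε ω i := funext fun ω => hbh ω k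
    rw [this]
    have Isum : Integrable (fun ω => ∑ i, Xd k i * ε ω i) μ :=
      integrable_finset_sum _ fun i _ => hXdε k i
    rw [integral_add (integrable_const _) Isum, integral_finset_sum _ fun i _ => hXdε k i]
    have : ∀ i : Fin n, ∫ ω, Xd k i * ε ω i ∂μ = 0 := fun i => by
      rw [integral_const_mul, hεmean i, mul_zero]
    simp [this]
  have hE2h : ∀ k l, ∫ ω, βhat ω k * βhat ω l ∂μ
      = β₀ k * β₀ l + σ ^ 2 * ∑ i, Xd k i * Xd l i := by
    intro k l
    have hptw : (fun ω => βhat ω k * βhat ω l)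
        = fun ω => β₀ k * β₀ l + (β₀ k * ∑ j, Xd l j * ε ω j
          + (β₀ l * ∑ i, Xd k i * ε ω i
            + ∑ i, ∑ j, (Xd k i * Xd l j) * (ε ω i * ε ω j))) := by
      funext ω
      have hsum : (∑ i, Xd k i * ε ω i) * (∑ j, Xd l j * ε ω j)
          = ∑ i, ∑ j, (Xd k i * Xd l j) * (ε ω i * ε ω j) := by
        rw [Finset.sum_mul_sum]
        exact Finset.sum_congr rfl fun i _ => Finset.sum_congr rfl fun j _ => by ring
      rw [hbh ω k, hbh ω l, ← hsum]
      ring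
    have hpint : ∀ (i j : Fin n), Integrable (fun ω => (Xd k i * Xd l j) * (ε ω i * ε ω j)) μ :=
      fun i j => (hεε i j).const_mul _
    have I2 : Integrable (fun ω => β₀ k * ∑ j, Xd l j * ε ω j) μ :=
      (integrable_finset_sum _ fun j _ => hXdε l j).const_mul _
    have I3 : Integrable (fun ω => β₀ l * ∑ i, Xd k i * ε ω i) μ :=
      (integrable_finset_sum _ fun i _ => hXdε k i).const_mul _
    have I4 : Integrable (fun ω => ∑ i, ∑ j, (Xd k i * Xd l j) * (ε ω i * ε ω j)) μ :=
      integrable_finset_sum _ fun i _ => integrable_finset_sum _ fun j _ => hpint i j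
    have I34 : Integrable (fun ω => β₀ l * ∑ i, Xd k i * ε ω i
        + ∑ i, ∑ j, (Xd k i * Xd l j) * (ε ω i * ε ω j)) μ := I3.add I4
    have I234 : Integrable (fun ω => β₀ k * ∑ j, Xd l j * ε ω j
        + (β₀ l * ∑ i, Xd k i * ε ω i
          + ∑ i, ∑ j, (Xd k i * Xd l j) * (ε ω i * ε ω j))) μ := I2.add I34
    rw [hptw, integral_add (integrable_const _) I234, integral_add I2 I34,
      integral_add I3 I4, integral_const]
    have hXdm : ∀ (a : Fin p) (i : Fin n), ∫ ω, Xd a i * ε ω i ∂μ = 0 := fun a i => by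
      rw [integral_const_mul, hεmean i, mul_zero]
    have e2 : ∫ ω, β₀ k * ∑ j, Xd l j * ε ω j ∂μ = 0 := by
      rw [integral_const_mul, integral_finset_sum _ fun j _ => hXdε l j]
      simp [hXdm l]
    have e3 : ∫ ω, β₀ l * ∑ i, Xd k i * ε ω i ∂μ = 0 := by
      rw [integral_const_mul, integral_finset_sum _ fun i _ => hXdε k i]
      simp [hXdm k]
    have e4 : ∫ ω, ∑ i, ∑ j, (Xd k i * Xd l j) * (ε ω i * ε ω j) ∂μ
        = σ ^ 2 * ∑ i, Xd k i * Xd l i := by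
      rw [integral_finset_sum _ fun i _ => integrable_finset_sum _ fun j _ => hpint i j]
      have : ∀ i : Fin n, ∫ ω, ∑ j, (Xd k i * Xd l j) * (ε ω i * ε ω j) ∂μ
          = (Xd k i * Xd l i) * σ ^ 2 := by
        intro i
        rw [integral_finset_sum _ fun j _ => hpint i j]
        have : ∀ j : Fin n, ∫ ω, (Xd k i * Xd l j) * (ε ω i * ε ω j) ∂μ
            = (Xd k i * Xd l j) * (if i = j then σ ^ 2 else 0) := fun j => by
          rw [integral_const_mul, hεcov i j]
        rw [Finset.sum_congr rfl fun j _ => this j]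
        simp [mul_ite, mul_zero]
      rw [Finset.sum_congr rfl fun i _ => this i, Finset.mul_sum]
      exact Finset.sum_congr rfl fun i _ => by ring
    rw [e2, e3, e4]
    simp
  have hVh' : ∀ k l, Vh k l = σ ^ 2 * ∑ i, Xd k i * Xd l i := by
    intro k l
    rw [hVh k l, hE2h k l, hEh k, hEh l]
    ring
  -- quadratic form comparison
  have hquad : ∀ v : Fin p → ℝ,
      ∑ k, ∑ l, v k * v l * Vh k l ≤ ∑ k, ∑ l, v k * v l * Vt k l := by
    intro v
    have heqF : (fun ω => ∑ i, (∑ k, v k * G (S ω) k i) ^ 2)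
        = fun ω => ∑ k, ∑ l, v k * v l * ∑ i, G (S ω) k i * G (S ω) l i := by
      funext ω
      rw [← aux_dot v (G (S ω)) (G (S ω))]
      exact Finset.sum_congr rfl fun i _ => by ring
    have hFint : Integrable (fun ω => ∑ i, (∑ k, v k * G (S ω) k i) ^ 2) μ := by
      rw [heqF]
      exact integrable_finset_sum _ fun k _ => integrable_finset_sum _ fun l _ =>
        ((integrable_finset_sum _ fun i _ => hGSGS k i l i).const_mul _)
    have hFval : ∫ ω, ∑ i, (∑ k, v k * G (S ω) k i) ^ 2 ∂μ
        = ∑ k, ∑ l, v k * v l * ∑ i, ∫ ω, G (S ω) k i * G (S ω) l i ∂μ := by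
      rw [heqF]
      rw [integral_finset_sum _ fun k _ => integrable_finset_sum _ fun l _ =>
        ((integrable_finset_sum _ fun i _ => hGSGS k i l i).const_mul _)]
      refine Finset.sum_congr rfl fun k _ => ?_
      rw [integral_finset_sum _ fun l _ =>
        ((integrable_finset_sum _ fun i _ => hGSGS k i l i).const_mul _)]
      refine Finset.sum_congr rfl fun l _ => ?_
      rw [integral_const_mul, integral_finset_sum _ fun i _ => hGSGS k i l i]
    have hTt : ∑ k, ∑ l, v k * v l * Vt k l
        = σ ^ 2 * ∫ ω, ∑ i, (∑ k, v k * G (S ω) k i) ^ 2 ∂μ := by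
      rw [hFval, Finset.mul_sum]
      refine Finset.sum_congr rfl fun k _ => ?_
      rw [Finset.mul_sum]
      refine Finset.sum_congr rfl fun l _ => ?_
      rw [hVt' k l]
      ring
    have hTh : ∑ k, ∑ l, v k * v l * Vh k l
        = σ ^ 2 * ∑ i, (∑ k, v k * Xd k i) ^ 2 := by
      have : ∑ i, (∑ k, v k * Xd k i) ^ 2 = ∑ k, ∑ l, v k * v l * ∑ i, Xd k i * Xd l i := by
        rw [← aux_dot v Xd Xd]
        exact Finset.sum_congr rfl fun i _ => by ring
      rw [this, Finset.mul_sum]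
      refine Finset.sum_congr rfl fun k _ => ?_
      rw [Finset.mul_sum]
      refine Finset.sum_congr rfl fun l _ => ?_
      rw [hVh' k l]
      ring
    have hmono : ∑ i, (∑ k, v k * Xd k i) ^ 2
        ≤ ∫ ω, ∑ i, (∑ k, v k * G (S ω) k i) ^ 2 ∂μ := by
      have hconst : ∫ (_ : Ω), (∑ i, (∑ k, v k * Xd k i) ^ 2) ∂μ
          = ∑ i, (∑ k, v k * Xd k i) ^ 2 := by
        rw [integral_const]
        simp
      rw [← hconst]
      refine integral_mono_ae (integrable_const _) hFint ?_
      filter_upwards [hae] with ω hω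
      exact aux_ptwise X Xd (G (S ω)) hXd hXdX hω.2 v
    rw [hTt, hTh]
    have hσ2 : (0:ℝ) ≤ σ ^ 2 := sq_nonneg σ
    exact mul_le_mul_of_nonneg_left hmono hσ2
  -- symmetry
  have hsymT : ∀ k l, Vt k l = Vt l k := by
    intro k l
    rw [hVt' k l, hVt' l k]
    congr 1
    refine Finset.sum_congr rfl fun i _ => ?_
    have : (fun ω => G (S ω) k i * G (S ω) l i) = fun ω => G (S ω) l i * G (S ω) k i :=
      funext fun ω => mul_comm _ _
    rw [this]
  have hsymH : ∀ k l, Vh k l = Vh l k := by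
    intro k l
    rw [hVh' k l, hVh' l k]
    congr 1
    exact Finset.sum_congr rfl fun i _ => mul_comm _ _
  have hpsd : (Vt - Vh).PosSemidef := by
    apply Matrix.PosSemidef.of_dotProduct_mulVec_nonneg
    · ext k l
      simp only [Matrix.conjTranspose_apply, Matrix.sub_apply, star_trivial]
      rw [hsymT l k, hsymH l k]
    · intro x
      have hdot : star x ⬝ᵥ ((Vt - Vh) *ᵥ x)
          = ∑ k, ∑ l, x k * x l * Vt k l - ∑ k, ∑ l, x k * x l * Vh k l := by
        simp only [dotProduct, Matrix.mulVec, Pi.star_apply, star_trivial,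
          Matrix.sub_apply]
        rw [← Finset.sum_sub_distrib]
        refine Finset.sum_congr rfl fun k _ => ?_
        rw [Finset.mul_sum, ← Finset.sum_sub_distrib]
        refine Finset.sum_congr rfl fun l _ => ?_
        ring
      rw [hdot]
      have := hquad x
      linarith
  refine ⟨hpsd, ?_⟩
  have htr : (0:ℝ) ≤ (Vt - Vh).trace := by
    have : (Vt - Vh).trace = ∑ k, (Vt - Vh) k k := by
      simp [Matrix.trace, Matrix.diag]
    rw [this]
    exact Finset.sum_nonneg fun k _ => aux_diag hpsd k
  have h2 : (Vt - Vh).trace = Vt.trace - Vh.trace := Matrix.trace_sub _ _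
  linarith
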